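/- arXiv:1307.3327 — 3 statements merged into one kernel-verified Lean document; each statement's English description precedes it below -/
import Mathlib

section
/- Let P(x,y) = y·log y, Q = 0, R = 1/(3y), S = 0 be defined for y > 0. Then the Lie linearization invariants A = ∂²P/∂y² − 2∂²Q/∂x∂y + ∂²R/∂x² + 2P·∂S/∂x + S·∂P/∂x − 3P·∂R/∂y − 3R·∂P/∂y − 3Q·∂R/∂x + 6Q·∂Q/∂y and B = ∂²S/∂x² − 2∂²R/∂x∂y + ∂²Q/∂y² − 2S·∂P/∂y − P·∂S/∂y + 3S·∂Q/∂x + 3Q·∂S/∂x + 3R·∂Q/∂y − 6R·∂R/∂x both vanish identically on {(x,y) : y > 0}. -/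
/-- partial derivative in the first (x) variable -/
noncomputable def pd1 (f : ℝ → ℝ → ℝ) : ℝ → ℝ → ℝ := fun x y => deriv (fun t => f t y) x
/-- partial derivative in the second (y) variable -/
noncomputable def pd2 (f : ℝ → ℝ → ℝ) : ℝ → ℝ → ℝ := fun x y => deriv (fun t => f x t) y

/-- Lie's first linearization invariant A for y'' = P + 3Q y' + 3R y'^2 + S y'^3 -/
noncomputable def lieA (P Q R S : ℝ → ℝ → ℝ) : ℝ → ℝ → ℝ := fun x y =>
  pd2 (pd2 P) x y - 2 * pd1 (pd2 Q) x y + pd1 (pd1 R) x y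
    + 2 * P x y * pd1 S x y + S x y * pd1 P x y
    - 3 * P x y * pd2 R x y - 3 * R x y * pd2 P x y
    - 3 * Q x y * pd1 R x y + 6 * Q x y * pd2 Q x y

/-- Lie's second linearization invariant B -/
noncomputable def lieB (P Q R S : ℝ → ℝ → ℝ) : ℝ → ℝ → ℝ := fun x y =>
  pd1 (pd1 S) x y - 2 * pd1 (pd2 R) x y + pd2 (pd2 Q) x y
    - 2 * S x y * pd2 P x y - P x y * pd2 S x y
    + 3 * S x y * pd1 Q x y + 3 * Q x y * pd1 S x y
    + 3 * R x y * pd2 Q x y - 6 * R x y * pd1 R x y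

lemma deriv_xlogx {y : ℝ} (hy : 0 < y) :
    deriv (fun t : ℝ => t * Real.log t) y = Real.log y + 1 := by
  have h := ((hasDerivAt_id y).mul (Real.hasDerivAt_log hy.ne')).deriv
  simp at h
  rw [show (fun t : ℝ => t * Real.log t) = id * Real.log from rfl, h]
  field_simp

lemma deriv2_xlogx {y : ℝ} (hy : 0 < y) :
    deriv (fun t : ℝ => deriv (fun s : ℝ => s * Real.log s) t) y = 1 / y := by
  have hev : (fun t : ℝ => deriv (fun s : ℝ => s * Real.log s) t)
      =ᶠ[nhds y] (fun t : ℝ => Real.log t + 1) := by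
    filter_upwards [eventually_gt_nhds hy] with t ht
    exact deriv_xlogx ht
  rw [hev.deriv_eq]
  have h := ((Real.hasDerivAt_log hy.ne').add_const 1).deriv
  rw [h, one_div]

lemma deriv_inv3 {y : ℝ} (hy : 0 < y) :
    deriv (fun t : ℝ => 1 / (3 * t)) y = -(3 / (3 * y) ^ 2) := by
  have h3 : (3 : ℝ) * y ≠ 0 := by positivity
  have h := (((hasDerivAt_id y).const_mul (3:ℝ)).inv h3).deriv
  simp only [id] at h
  simp only [one_div]
  rw [show (fun t : ℝ => (3 * t)⁻¹) = (fun y : ℝ => 3 * y)⁻¹ from rfl, h]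
  ring

theorem kamke_6_113_linearizable :
    ∀ x y : ℝ, 0 < y →
      lieA (fun _ y => y * Real.log y) (fun _ _ => 0) (fun _ y => 1 / (3 * y)) (fun _ _ => 0) x y = 0 ∧
      lieB (fun _ y => y * Real.log y) (fun _ _ => 0) (fun _ y => 1 / (3 * y)) (fun _ _ => 0) x y = 0 := by
  intro x y hy
  have hy' : y ≠ 0 := hy.ne'
  constructor
  · simp only [lieA, pd1, pd2, deriv_const]
    rw [deriv2_xlogx hy, deriv_xlogx hy, deriv_inv3 hy]
    field_simp
    ring
  · simp only [lieB, pd1, pd2, deriv_const]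
    ring
end

section
/- Let c ∈ ℝ, let I ⊆ ℝ be an open interval on which 1 + c·x > 0, and let y be twice differentiable with y(t) > 0 and y''(t) = 1/y(t)³ for all t in the image of t(x) = x/(1+cx), x ∈ I. Then w(x) = (1+cx)·y(x/(1+cx)) satisfies w(x) > 0 and w''(x) = 1/w(x)³ for all x ∈ I. -/
/-- Projective symmetry of y'' = 1/y³: w(x) = (1+cx)·y(x/(1+cx)) is again a solution. -/
theorem cube_inverse_model_projective_symmetry
    (c : ℝ) (I : Set ℝ) (hI : IsOpen I) (hIconv : Convex ℝ I)
    (hpos : ∀ x ∈ I, 0 < 1 + c * x)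
    (y y₁ y₂ : ℝ → ℝ)
    (hy : ∀ t ∈ (fun x => x / (1 + c * x)) '' I, HasDerivAt y (y₁ t) t)
    (hy₁ : ∀ t ∈ (fun x => x / (1 + c * x)) '' I, HasDerivAt y₁ (y₂ t) t)
    (hypos : ∀ t ∈ (fun x => x / (1 + c * x)) '' I, 0 < y t)
    (hode : ∀ t ∈ (fun x => x / (1 + c * x)) '' I, y₂ t = 1 / (y t) ^ 3) :
    (∀ x ∈ I, 0 < (1 + c * x) * y (x / (1 + c * x))) ∧
    ∃ w' : ℝ → ℝ, ∀ x ∈ I,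
      HasDerivAt (fun x => (1 + c * x) * y (x / (1 + c * x))) (w' x) x ∧
      HasDerivAt w' (1 / ((1 + c * x) * y (x / (1 + c * x))) ^ 3) x := by
  constructor
  · intro x hx
    exact mul_pos (hpos x hx) (hypos _ ⟨x, hx, rfl⟩)
  · refine ⟨fun x => c * y (x / (1 + c * x)) + y₁ (x / (1 + c * x)) / (1 + c * x), ?_⟩
    intro x hx
    have h1 : (0:ℝ) < 1 + c * x := hpos x hx
    have h1' : (1 + c * x) ≠ 0 := ne_of_gt h1
    set t := x / (1 + c * x) with ht
    have hmem : t ∈ (fun x => x / (1 + c * x)) '' I := ⟨x, hx, rfl⟩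
    have hypos' : y t ≠ 0 := ne_of_gt (hypos t hmem)
    have hlin : HasDerivAt (fun x : ℝ => 1 + c * x) c x := by
      simpa using ((hasDerivAt_id x).const_mul c).const_add 1
    have htd : HasDerivAt (fun x : ℝ => x / (1 + c * x)) (1 / (1 + c * x) ^ 2) x := by
      have := (hasDerivAt_id x).div hlin h1'
      refine this.congr_deriv ?_
      field_simp
      simp only [id]
      ring
    have hyc : HasDerivAt (fun x : ℝ => y (x / (1 + c * x)))
        (y₁ t * (1 / (1 + c * x) ^ 2)) x := (hy t hmem).comp x htd
    have hy1c : HasDerivAt (fun x : ℝ => y₁ (x / (1 + c * x)))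
        (y₂ t * (1 / (1 + c * x) ^ 2)) x := (hy₁ t hmem).comp x htd
    constructor
    · have := hlin.mul hyc
      refine this.congr_deriv ?_
      field_simp
      ring
    · have := (hyc.const_mul c).add (hy1c.div hlin h1')
      refine this.congr_deriv ?_
      rw [hode t hmem]
      field_simp
      ring
end

section
/- Fix k ≠ 0 and c ∈ ℝ, and let y : ℝ → ℝ be twice differentiable satisfying y''(x) = (y'(x))³ − k·y(x)·(y'(x))² + k²·y(x)²·y'(x)/3 + 1/k + k²·y(x)/9 − k³·y(x)³/27 for all x. Then z(x) = y(x) + c·exp(kx/3) satisfies the same equation: z''(x) = (z'(x))³ − k·z(x)·(z'(x))² + k²·z(x)²·z'(x)/3 + 1/k + k²·z(x)/9 − k³·z(x)³/27 for all x. -/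
private lemma exp_deriv (k c : ℝ) :
    deriv (fun x : ℝ => c * Real.exp (k * x / 3)) = fun x => c * (k / 3) * Real.exp (k * x / 3) := by
  funext x
  have h2 : HasDerivAt (fun x : ℝ => k * x / 3) (k / 3) x := by
    simpa using ((hasDerivAt_id x).const_mul k).div_const 3
  have h3 : HasDerivAt (fun x : ℝ => c * Real.exp (k * x / 3))
      (c * (Real.exp (k * x / 3) * (k / 3))) x := (h2.exp).const_mul c
  rw [h3.deriv]; ring

private lemma rhs_key (k u v : ℝ) :
    u ^ 3 - k * v * u ^ 2 + k ^ 2 * v ^ 2 * u / 3 + 1 / k + k ^ 2 * v / 9 - k ^ 3 * v ^ 3 / 27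
      = (u - k * v / 3) ^ 3 + 1 / k + k ^ 2 * v / 9 := by ring

/-- Symmetry of the Theorem 6 model equation under y ↦ y + c·e^(kx/3). -/
theorem theorem6_model_symmetry (k : ℝ) (hk : k ≠ 0) (c : ℝ)
    (y : ℝ → ℝ) (hy : Differentiable ℝ y) (hy' : Differentiable ℝ (deriv y))
    (hode : ∀ x, deriv (deriv y) x
        = (deriv y x) ^ 3 - k * y x * (deriv y x) ^ 2 + k ^ 2 * (y x) ^ 2 * deriv y x / 3
          + 1 / k + k ^ 2 * y x / 9 - k ^ 3 * (y x) ^ 3 / 27) :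
    ∀ x, deriv (deriv (fun x => y x + c * Real.exp (k * x / 3))) x
        = (deriv (fun x => y x + c * Real.exp (k * x / 3)) x) ^ 3
          - k * (y x + c * Real.exp (k * x / 3))
              * (deriv (fun x => y x + c * Real.exp (k * x / 3)) x) ^ 2
          + k ^ 2 * (y x + c * Real.exp (k * x / 3)) ^ 2
              * deriv (fun x => y x + c * Real.exp (k * x / 3)) x / 3
          + 1 / k + k ^ 2 * (y x + c * Real.exp (k * x / 3)) / 9
          - k ^ 3 * (y x + c * Real.exp (k * x / 3)) ^ 3 / 27 := by
  intro x
  have hexp : Differentiable ℝ (fun x : ℝ => c * Real.exp (k * x / 3)) := by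
    apply Differentiable.const_mul
    exact Real.differentiable_exp.comp ((differentiable_id.const_mul k).div_const 3)
  have hd1 : deriv (fun x => y x + c * Real.exp (k * x / 3))
      = fun x => deriv y x + c * (k / 3) * Real.exp (k * x / 3) := by
    funext t
    rw [deriv_fun_add (hy t) (hexp t), exp_deriv k c]
  have hexp2 : Differentiable ℝ (fun x : ℝ => c * (k / 3) * Real.exp (k * x / 3)) := by
    apply Differentiable.const_mul
    exact Real.differentiable_exp.comp ((differentiable_id.const_mul k).div_const 3)
  have hd2 : deriv (deriv (fun x => y x + c * Real.exp (k * x / 3))) x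
      = deriv (deriv y) x + c * (k / 3) * (k / 3) * Real.exp (k * x / 3) := by
    rw [hd1, deriv_fun_add (hy' x) (hexp2 x), exp_deriv k (c * (k / 3))]
  rw [hd2, hd1, hode x, rhs_key, rhs_key]
  have h1 : deriv y x + c * (k / 3) * Real.exp (k * x / 3)
      - k * (y x + c * Real.exp (k * x / 3)) / 3 = deriv y x - k * y x / 3 := by ring
  rw [h1]
  ring
end
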